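/- Let G = G₁ • G₂ be a series composition of two two-terminal labeled simple graphs (identifying the sink t₁ of G₁ with the source s₂ of G₂), embedded in a larger simple graph without parallel edges. Then there do not exist two edge-disjoint cycles C, C', each of length at most 4, both of which enter G (contain an edge of G and an edge outside G). -/

import Mathlib

open SimpleGraph

private lemma key_cycle_lemma {V : Type*} {Γ : SimpleGraph V} {H₁ H₂ : Γ.Subgraph} {s v t : V}
    (hst : s ≠ t)
    (hs₂ : s ∉ H₂.verts) (ht₁ : t ∉ H₁.verts)
    (hmid : H₁.verts ∩ H₂.verts = {v})
    (hclosed : ∀ u ∈ (H₁ ⊔ H₂).verts, u ≠ s → u ≠ t →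
        ∀ w : V, Γ.Adj u w → s(u, w) ∈ (H₁ ⊔ H₂).edgeSet)
    {a : V} {C : Γ.Walk a a} (hC : C.IsCycle) (hlen : C.length ≤ 4)
    (hin : ∃ e ∈ C.edges, e ∈ (H₁ ⊔ H₂).edgeSet)
    (hout : ∃ e ∈ C.edges, e ∉ (H₁ ⊔ H₂).edgeSet) :
    (s(s,v) ∈ C.edges ∨ s(v,t) ∈ C.edges) ∧
    (s(s,t) ∈ C.edges ∨ (s(s,v) ∈ C.edges ∧ s(v,t) ∈ C.edges)) := by
  classical
  have hmidv : ∀ x : V, x ∈ H₁.verts → x ∈ H₂.verts → x = v := by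
    intro x h1 h2
    have : x ∈ H₁.verts ∩ H₂.verts := ⟨h1, h2⟩
    rwa [hmid, Set.mem_singleton_iff] at this
  have hsides : ∀ x y : V, s(x,y) ∈ (H₁ ⊔ H₂).edgeSet →
      (x ∈ H₁.verts ∧ y ∈ H₁.verts) ∨ (x ∈ H₂.verts ∧ y ∈ H₂.verts) := by
    intro x y h
    rw [Subgraph.edgeSet_sup] at h
    rcases h with h | h <;> rw [Subgraph.mem_edgeSet] at h
    · exact Or.inl ⟨h.fst_mem, h.snd_mem⟩
    · exact Or.inr ⟨h.fst_mem, h.snd_mem⟩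
  have hWv : ∀ x y : V, s(x,y) ∈ (H₁ ⊔ H₂).edgeSet → x ∈ (H₁ ⊔ H₂).verts := by
    intro x y h
    rw [Subgraph.verts_sup]
    rcases hsides x y h with ⟨h, _⟩ | ⟨h, _⟩
    · exact Or.inl h
    · exact Or.inr h
  have htr : ∀ x y z : V, Γ.Adj x y → s(x,y) ∉ (H₁ ⊔ H₂).edgeSet →
      s(x,z) ∈ (H₁ ⊔ H₂).edgeSet → x = s ∨ x = t := by
    intro x y z hadj hxy hxz
    by_contra hc
    push_neg at hc
    exact hxy (hclosed x (hWv x z hxz) hc.1 hc.2 y hadj)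
  have hstS : s(s,t) ∉ (H₁ ⊔ H₂).edgeSet := by
    intro h
    rcases hsides s t h with ⟨_, h⟩ | ⟨h, _⟩
    · exact ht₁ h
    · exact hs₂ h
  have oneIn : ∀ x y : V, x ≠ y → (x = s ∨ x = t) → (y = s ∨ y = t) →
      s(x,y) ∈ (H₁ ⊔ H₂).edgeSet → False := by
    intro x y hxy hx hy h
    rcases hx with hx | hx <;> rcases hy with hy | hy
    · exact hxy (hx.trans hy.symm)
    · rw [hx, hy] at h; exact hstS h
    · rw [hx, hy, Sym2.eq_swap] at h; exact hstS h
    · exact hxy (hx.trans hy.symm)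
  have pigeon : ∀ x y z : V, x ≠ y → x ≠ z → y ≠ z →
      (x = s ∨ x = t) → (y = s ∨ y = t) → (z = s ∨ z = t) → False := by
    intro x y z h1 h2 h3 hx hy hz
    rcases hx with hx | hx <;> rcases hy with hy | hy <;> rcases hz with hz | hz
    · exact h1 (hx.trans hy.symm)
    · exact h1 (hx.trans hy.symm)
    · exact h2 (hx.trans hz.symm)
    · exact h3 (hy.trans hz.symm)
    · exact h3 (hy.trans hz.symm)
    · exact h2 (hx.trans hz.symm)
    · exact h1 (hx.trans hy.symm)
    · exact h1 (hx.trans hy.symm)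
  have twoIn : ∀ p x q : V, p ≠ q → (p = s ∨ p = t) → (q = s ∨ q = t) →
      s(p,x) ∈ (H₁ ⊔ H₂).edgeSet → s(x,q) ∈ (H₁ ⊔ H₂).edgeSet →
      (s(p,x) = s(s,v) ∧ s(x,q) = s(v,t)) ∨ (s(p,x) = s(v,t) ∧ s(x,q) = s(s,v)) := by
    intro p x q hpq hp hq h1 h2
    rcases hp with hp | hp <;> rcases hq with hq | hq
    · exact absurd (hp.trans hq.symm) hpq
    · rw [hp] at h1
      rw [hq] at h2
      have hx1 : x ∈ H₁.verts := by
        rcases hsides s x h1 with ⟨_, h⟩ | ⟨h, _⟩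
        · exact h
        · exact absurd h hs₂
      have hx2 : x ∈ H₂.verts := by
        rcases hsides x t h2 with ⟨_, h⟩ | ⟨h, _⟩
        · exact absurd h ht₁
        · exact h
      rw [hp, hq, hmidv x hx1 hx2]
      exact Or.inl ⟨rfl, rfl⟩
    · rw [hp] at h1
      rw [hq] at h2
      have hx2 : x ∈ H₂.verts := by
        rcases hsides t x h1 with ⟨h, _⟩ | ⟨_, h⟩
        · exact absurd h ht₁
        · exact h
      have hx1 : x ∈ H₁.verts := by
        rcases hsides x s h2 with ⟨h, _⟩ | ⟨_, h⟩
        · exact h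
        · exact absurd h hs₂
      rw [hp, hq, hmidv x hx1 hx2]
      exact Or.inr ⟨Sym2.eq_swap, Sym2.eq_swap⟩
    · exact absurd (hp.trans hq.symm) hpq
  have threeIn : ∀ p x y q : V, p ≠ q → (p = s ∨ p = t) → (q = s ∨ q = t) →
      s(p,x) ∈ (H₁ ⊔ H₂).edgeSet → s(x,y) ∈ (H₁ ⊔ H₂).edgeSet →
      s(y,q) ∈ (H₁ ⊔ H₂).edgeSet →
      (s(p,x) = s(s,v) ∨ s(p,x) = s(v,t) ∨ s(y,q) = s(s,v) ∨ s(y,q) = s(v,t)) ∧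
        s(q,p) = s(s,t) := by
    intro p x y q hpq hp hq h1 h2 h3
    rcases hp with hp | hp <;> rcases hq with hq | hq
    · exact absurd (hp.trans hq.symm) hpq
    · rw [hp] at h1
      rw [hq] at h3
      refine ⟨?_, by rw [hp, hq]; exact Sym2.eq_swap⟩
      have hx1 : x ∈ H₁.verts := by
        rcases hsides s x h1 with ⟨_, h⟩ | ⟨h, _⟩
        · exact h
        · exact absurd h hs₂
      have hy2 : y ∈ H₂.verts := by
        rcases hsides y t h3 with ⟨_, h⟩ | ⟨h, _⟩
        · exact absurd h ht₁
        · exact h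
      rcases hsides x y h2 with ⟨_, hy1⟩ | ⟨hx2, _⟩
      · right; right; right; rw [hq, hmidv y hy1 hy2]
      · left; rw [hp, hmidv x hx1 hx2]
    · rw [hp] at h1
      rw [hq] at h3
      refine ⟨?_, by rw [hp, hq]⟩
      have hx2 : x ∈ H₂.verts := by
        rcases hsides t x h1 with ⟨h, _⟩ | ⟨_, h⟩
        · exact absurd h ht₁
        · exact h
      have hy1 : y ∈ H₁.verts := by
        rcases hsides y s h3 with ⟨h, _⟩ | ⟨_, h⟩
        · exact h
        · exact absurd h hs₂
      rcases hsides x y h2 with ⟨hx1, _⟩ | ⟨_, hy2⟩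
      · right; left; rw [hp, hmidv x hx1 hx2]; exact Sym2.eq_swap
      · right; right; left; rw [hq, hmidv y hy1 hy2]; exact Sym2.eq_swap
    · exact absurd (hp.trans hq.symm) hpq
  have h3le := hC.three_le_length
  cases C with
  | nil => simp at h3le
  | cons h₁ p₁ =>
  rename_i x
  cases p₁ with
  | nil => simp at h3le
  | cons h₂ p₂ =>
  rename_i y
  cases p₂ with
  | nil => simp at h3le
  | cons h₃ p₃ =>
  rename_i z
  cases p₃ with
  | nil =>
    have hnd := hC.support_nodup
    simp only [Walk.support_cons, Walk.support_nil, List.tail_cons] at hnd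
    have hxy : x ≠ y := fun h => by rw [h] at hnd; simp at hnd
    have hxa : x ≠ a := fun h => by rw [h] at hnd; simp at hnd
    have hya : y ≠ a := fun h => by rw [h] at hnd; simp at hnd
    by_cases h1 : s(a, x) ∈ (H₁ ⊔ H₂).edgeSet <;>
      by_cases h2 : s(x, y) ∈ (H₁ ⊔ H₂).edgeSet <;>
      by_cases h3 : s(y, a) ∈ (H₁ ⊔ H₂).edgeSet
    · obtain ⟨e, he, heS⟩ := hout
      simp only [Walk.edges_cons, Walk.edges_nil, List.mem_cons, List.not_mem_nil,
        or_false] at he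
      rcases he with rfl | rfl | rfl <;> contradiction
    · have ha : a = s ∨ a = t := htr a y x h₃.symm (by rw [Sym2.eq_swap]; exact h3) h1
      have hy : y = s ∨ y = t := htr y a x h₃ h3 (by rw [Sym2.eq_swap]; exact h2)
      rcases twoIn a x y hya.symm ha hy h1 h2 with ⟨e1, e2⟩ | ⟨e1, e2⟩
      · exact ⟨Or.inl (by rw [← e1]; simp), Or.inr ⟨by rw [← e1]; simp, by rw [← e2]; simp⟩⟩
      · exact ⟨Or.inl (by rw [← e2]; simp), Or.inr ⟨by rw [← e2]; simp, by rw [← e1]; simp⟩⟩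
    · have hx : x = s ∨ x = t := htr x y a h₂ h2 (by rw [Sym2.eq_swap]; exact h1)
      have hy : y = s ∨ y = t := htr y x a h₂.symm (by rw [Sym2.eq_swap]; exact h2) h3
      rcases twoIn y a x hxy.symm hy hx h3 h1 with ⟨e1, e2⟩ | ⟨e1, e2⟩
      · exact ⟨Or.inl (by rw [← e1]; simp), Or.inr ⟨by rw [← e1]; simp, by rw [← e2]; simp⟩⟩
      · exact ⟨Or.inl (by rw [← e2]; simp), Or.inr ⟨by rw [← e2]; simp, by rw [← e1]; simp⟩⟩
    · have ha : a = s ∨ a = t := htr a y x h₃.symm (by rw [Sym2.eq_swap]; exact h3) h1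
      have hx : x = s ∨ x = t := htr x y a h₂ h2 (by rw [Sym2.eq_swap]; exact h1)
      exact (oneIn a x h₁.ne ha hx h1).elim
    · have ha : a = s ∨ a = t := htr a x y h₁ h1 (by rw [Sym2.eq_swap]; exact h3)
      have hx : x = s ∨ x = t := htr x a y h₁.symm (by rw [Sym2.eq_swap]; exact h1) h2
      rcases twoIn x y a hxa hx ha h2 h3 with ⟨e1, e2⟩ | ⟨e1, e2⟩
      · exact ⟨Or.inl (by rw [← e1]; simp), Or.inr ⟨by rw [← e1]; simp, by rw [← e2]; simp⟩⟩
      · exact ⟨Or.inl (by rw [← e2]; simp), Or.inr ⟨by rw [← e2]; simp, by rw [← e1]; simp⟩⟩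
    · have hx : x = s ∨ x = t := htr x a y h₁.symm (by rw [Sym2.eq_swap]; exact h1) h2
      have hy : y = s ∨ y = t := htr y a x h₃ h3 (by rw [Sym2.eq_swap]; exact h2)
      exact (oneIn x y h₂.ne hx hy h2).elim
    · have hy : y = s ∨ y = t := htr y x a h₂.symm (by rw [Sym2.eq_swap]; exact h2) h3
      have ha : a = s ∨ a = t := htr a x y h₁ h1 (by rw [Sym2.eq_swap]; exact h3)
      exact (oneIn y a h₃.ne hy ha h3).elim
    · obtain ⟨e, he, heS⟩ := hin
      simp only [Walk.edges_cons, Walk.edges_nil, List.mem_cons, List.not_mem_nil,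
        or_false] at he
      rcases he with rfl | rfl | rfl <;> contradiction
  | cons h₄ p₄ =>
  rename_i w
  cases p₄ with
  | nil =>
    have hnd := hC.support_nodup
    simp only [Walk.support_cons, Walk.support_nil, List.tail_cons] at hnd
    have hxy : x ≠ y := fun h => by rw [h] at hnd; simp at hnd
    have hxz : x ≠ z := fun h => by rw [h] at hnd; simp at hnd
    have hxa : x ≠ a := fun h => by rw [h] at hnd; simp at hnd
    have hyz : y ≠ z := fun h => by rw [h] at hnd; simp at hnd
    have hya : y ≠ a := fun h => by rw [h] at hnd; simp at hnd
    have hza : z ≠ a := fun h => by rw [h] at hnd; simp at hnd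
    by_cases h1 : s(a, x) ∈ (H₁ ⊔ H₂).edgeSet <;>
      by_cases h2 : s(x, y) ∈ (H₁ ⊔ H₂).edgeSet <;>
      by_cases h3 : s(y, z) ∈ (H₁ ⊔ H₂).edgeSet <;>
      by_cases h4 : s(z, a) ∈ (H₁ ⊔ H₂).edgeSet
    -- TTTT
    · obtain ⟨e, he, heS⟩ := hout
      simp only [Walk.edges_cons, Walk.edges_nil, List.mem_cons, List.not_mem_nil,
        or_false] at he
      rcases he with rfl | rfl | rfl | rfl <;> contradiction
    -- TTTF
    · have ha : a = s ∨ a = t := htr a z x h₄.symm (by rw [Sym2.eq_swap]; exact h4) h1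
      have hz : z = s ∨ z = t := htr z a y h₄ h4 (by rw [Sym2.eq_swap]; exact h3)
      obtain ⟨hd, he⟩ := threeIn a x y z hza.symm ha hz h1 h2 h3
      refine ⟨?_, Or.inl (by rw [← he]; simp)⟩
      rcases hd with e | e | e | e
      · exact Or.inl (by rw [← e]; simp)
      · exact Or.inr (by rw [← e]; simp)
      · exact Or.inl (by rw [← e]; simp)
      · exact Or.inr (by rw [← e]; simp)
    -- TTFT
    · have hz : z = s ∨ z = t := htr z y a h₃.symm (by rw [Sym2.eq_swap]; exact h3) h4
      have hy : y = s ∨ y = t := htr y z x h₃ h3 (by rw [Sym2.eq_swap]; exact h2)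
      obtain ⟨hd, he⟩ := threeIn z a x y hyz.symm hz hy h4 h1 h2
      refine ⟨?_, Or.inl (by rw [← he]; simp)⟩
      rcases hd with e | e | e | e
      · exact Or.inl (by rw [← e]; simp)
      · exact Or.inr (by rw [← e]; simp)
      · exact Or.inl (by rw [← e]; simp)
      · exact Or.inr (by rw [← e]; simp)
    -- TTFF
    · have ha : a = s ∨ a = t := htr a z x h₄.symm (by rw [Sym2.eq_swap]; exact h4) h1
      have hy : y = s ∨ y = t := htr y z x h₃ h3 (by rw [Sym2.eq_swap]; exact h2)
      rcases twoIn a x y hya.symm ha hy h1 h2 with ⟨e1, e2⟩ | ⟨e1, e2⟩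
      · exact ⟨Or.inl (by rw [← e1]; simp), Or.inr ⟨by rw [← e1]; simp, by rw [← e2]; simp⟩⟩
      · exact ⟨Or.inl (by rw [← e2]; simp), Or.inr ⟨by rw [← e2]; simp, by rw [← e1]; simp⟩⟩
    -- TFTT
    · have hy : y = s ∨ y = t := htr y x z h₂.symm (by rw [Sym2.eq_swap]; exact h2) h3
      have hx : x = s ∨ x = t := htr x y a h₂ h2 (by rw [Sym2.eq_swap]; exact h1)
      obtain ⟨hd, he⟩ := threeIn y z a x hxy.symm hy hx h3 h4 h1
      refine ⟨?_, Or.inl (by rw [← he]; simp)⟩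
      rcases hd with e | e | e | e
      · exact Or.inl (by rw [← e]; simp)
      · exact Or.inr (by rw [← e]; simp)
      · exact Or.inl (by rw [← e]; simp)
      · exact Or.inr (by rw [← e]; simp)
    -- TFTF
    · have ha : a = s ∨ a = t := htr a z x h₄.symm (by rw [Sym2.eq_swap]; exact h4) h1
      have hx : x = s ∨ x = t := htr x y a h₂ h2 (by rw [Sym2.eq_swap]; exact h1)
      have hy : y = s ∨ y = t := htr y x z h₂.symm (by rw [Sym2.eq_swap]; exact h2) h3
      exact (pigeon a x y h₁.ne hya.symm hxy ha hx hy).elim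
    -- TFFT
    · have hz : z = s ∨ z = t := htr z y a h₃.symm (by rw [Sym2.eq_swap]; exact h3) h4
      have hx : x = s ∨ x = t := htr x y a h₂ h2 (by rw [Sym2.eq_swap]; exact h1)
      rcases twoIn z a x hxz.symm hz hx h4 h1 with ⟨e1, e2⟩ | ⟨e1, e2⟩
      · exact ⟨Or.inl (by rw [← e1]; simp), Or.inr ⟨by rw [← e1]; simp, by rw [← e2]; simp⟩⟩
      · exact ⟨Or.inl (by rw [← e2]; simp), Or.inr ⟨by rw [← e2]; simp, by rw [← e1]; simp⟩⟩
    -- TFFF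
    · have ha : a = s ∨ a = t := htr a z x h₄.symm (by rw [Sym2.eq_swap]; exact h4) h1
      have hx : x = s ∨ x = t := htr x y a h₂ h2 (by rw [Sym2.eq_swap]; exact h1)
      exact (oneIn a x h₁.ne ha hx h1).elim
    -- FTTT
    · have hx : x = s ∨ x = t := htr x a y h₁.symm (by rw [Sym2.eq_swap]; exact h1) h2
      have ha : a = s ∨ a = t := htr a x z h₁ h1 (by rw [Sym2.eq_swap]; exact h4)
      obtain ⟨hd, he⟩ := threeIn x y z a hxa hx ha h2 h3 h4
      refine ⟨?_, Or.inl (by rw [← he]; simp)⟩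
      rcases hd with e | e | e | e
      · exact Or.inl (by rw [← e]; simp)
      · exact Or.inr (by rw [← e]; simp)
      · exact Or.inl (by rw [← e]; simp)
      · exact Or.inr (by rw [← e]; simp)
    -- FTTF
    · have hx : x = s ∨ x = t := htr x a y h₁.symm (by rw [Sym2.eq_swap]; exact h1) h2
      have hz : z = s ∨ z = t := htr z a y h₄ h4 (by rw [Sym2.eq_swap]; exact h3)
      rcases twoIn x y z hxz hx hz h2 h3 with ⟨e1, e2⟩ | ⟨e1, e2⟩
      · exact ⟨Or.inl (by rw [← e1]; simp), Or.inr ⟨by rw [← e1]; simp, by rw [← e2]; simp⟩⟩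
      · exact ⟨Or.inl (by rw [← e2]; simp), Or.inr ⟨by rw [← e2]; simp, by rw [← e1]; simp⟩⟩
    -- FTFT
    · have hx : x = s ∨ x = t := htr x a y h₁.symm (by rw [Sym2.eq_swap]; exact h1) h2
      have hy : y = s ∨ y = t := htr y z x h₃ h3 (by rw [Sym2.eq_swap]; exact h2)
      have hz : z = s ∨ z = t := htr z y a h₃.symm (by rw [Sym2.eq_swap]; exact h3) h4
      exact (pigeon x y z hxy hxz hyz hx hy hz).elim
    -- FTFF
    · have hx : x = s ∨ x = t := htr x a y h₁.symm (by rw [Sym2.eq_swap]; exact h1) h2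
      have hy : y = s ∨ y = t := htr y z x h₃ h3 (by rw [Sym2.eq_swap]; exact h2)
      exact (oneIn x y h₂.ne hx hy h2).elim
    -- FFTT
    · have hy : y = s ∨ y = t := htr y x z h₂.symm (by rw [Sym2.eq_swap]; exact h2) h3
      have ha : a = s ∨ a = t := htr a x z h₁ h1 (by rw [Sym2.eq_swap]; exact h4)
      rcases twoIn y z a hya hy ha h3 h4 with ⟨e1, e2⟩ | ⟨e1, e2⟩
      · exact ⟨Or.inl (by rw [← e1]; simp), Or.inr ⟨by rw [← e1]; simp, by rw [← e2]; simp⟩⟩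
      · exact ⟨Or.inl (by rw [← e2]; simp), Or.inr ⟨by rw [← e2]; simp, by rw [← e1]; simp⟩⟩
    -- FFTF
    · have hy : y = s ∨ y = t := htr y x z h₂.symm (by rw [Sym2.eq_swap]; exact h2) h3
      have hz : z = s ∨ z = t := htr z a y h₄ h4 (by rw [Sym2.eq_swap]; exact h3)
      exact (oneIn y z h₃.ne hy hz h3).elim
    -- FFFT
    · have hz : z = s ∨ z = t := htr z y a h₃.symm (by rw [Sym2.eq_swap]; exact h3) h4
      have ha : a = s ∨ a = t := htr a x z h₁ h1 (by rw [Sym2.eq_swap]; exact h4)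
      exact (oneIn z a h₄.ne hz ha h4).elim
    -- FFFF
    · obtain ⟨e, he, heS⟩ := hin
      simp only [Walk.edges_cons, Walk.edges_nil, List.mem_cons, List.not_mem_nil,
        or_false] at he
      rcases he with rfl | rfl | rfl | rfl <;> contradiction
  | cons h₅ p₅ =>
    simp [Walk.length_cons] at hlen; omega

theorem no_two_short_cycles_enter_series_composition
    {V : Type*} (Γ : SimpleGraph V)
    (H₁ H₂ : Γ.Subgraph) (s v t : V)
    (hsv : s ≠ v) (hvt : v ≠ t) (hst : s ≠ t)
    (hs₁ : s ∈ H₁.verts) (hs₂ : s ∉ H₂.verts)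
    (ht₂ : t ∈ H₂.verts) (ht₁ : t ∉ H₁.verts)
    (hmid : H₁.verts ∩ H₂.verts = {v})
    (hclosed : ∀ u ∈ (H₁ ⊔ H₂).verts, u ≠ s → u ≠ t →
        ∀ w : V, Γ.Adj u w → s(u, w) ∈ (H₁ ⊔ H₂).edgeSet) :
    ¬ ∃ (a b : V) (C : Γ.Walk a a) (C' : Γ.Walk b b),
        C.IsCycle ∧ C'.IsCycle ∧ C.length ≤ 4 ∧ C'.length ≤ 4 ∧
        (∀ e ∈ C.edges, e ∉ C'.edges) ∧
        (∃ e ∈ C.edges, e ∈ (H₁ ⊔ H₂).edgeSet) ∧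
        (∃ e ∈ C.edges, e ∉ (H₁ ⊔ H₂).edgeSet) ∧
        (∃ e ∈ C'.edges, e ∈ (H₁ ⊔ H₂).edgeSet) ∧
        (∃ e ∈ C'.edges, e ∉ (H₁ ⊔ H₂).edgeSet) := by
  rintro ⟨a, b, C, C', hC, hC', hl, hl', hdisj, hin, hout, hin', hout'⟩
  obtain ⟨hA, hB⟩ := key_cycle_lemma hst hs₂ ht₁ hmid hclosed hC hl hin hout
  obtain ⟨hA', hB'⟩ := key_cycle_lemma hst hs₂ ht₁ hmid hclosed hC' hl' hin' hout'
  rcases hB with hstC | ⟨h1, h2⟩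
  · rcases hB' with hstC' | ⟨h1', h2'⟩
    · exact hdisj _ hstC hstC'
    · rcases hA with h | h
      · exact hdisj _ h h1'
      · exact hdisj _ h h2'
  · rcases hA' with h | h
    · exact hdisj _ h1 h
    · exact hdisj _ h2 h
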